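/- Let n ≥ 2 and let C ∈ ℤ^{n×n} be an upper Hessenberg integer matrix with unit subdiagonal: C(i+1, i) = 1 for all 1 ≤ i ≤ n−1, and C(i,j) = 0 whenever i ≥ j + 2. Then there exists a unimodular matrix M ∈ ℤ^{n×n} with det M = 1 such that for all rows i ≥ 2 of the product C·M: (C·M)(i, i−1) = 1 and (C·M)(i, j) = 0 for every j ≠ i−1. (That is, integer column operations can clear all of rows 2 through n of C except for the unit subdiagonal entries.) -/
import Mathlib


/-- Let the dimension be `n + 2 ≥ 2` and let `C` be an upper Hessenberg
integer matrix with unit subdiagonal: `C (i+1) i = 1` and `C i j = 0` whenever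
`i ≥ j + 2` (0-indexed).  Then there exists a unimodular matrix `M` with `det M = 1`
such that in the product `C * M`, every row `i ≥ 1` is zero except for the unit
subdiagonal entry: `(C * M) i j = 1` if `i = j + 1` and `= 0` otherwise. -/
theorem stmt_15 (n : ℕ) (C : Matrix (Fin (n + 2)) (Fin (n + 2)) ℤ)
    (hsub : ∀ i j : Fin (n + 2), (i : ℕ) = (j : ℕ) + 1 → C i j = 1)
    (hlow : ∀ i j : Fin (n + 2), (j : ℕ) + 2 ≤ (i : ℕ) → C i j = 0) :
    ∃ M : Matrix (Fin (n + 2)) (Fin (n + 2)) ℤ,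
      M.det = 1 ∧
      ∀ i j : Fin (n + 2), 1 ≤ (i : ℕ) →
        (C * M) i j = if (i : ℕ) = (j : ℕ) + 1 then 1 else 0 := by
  set B : Matrix (Fin (n + 2)) (Fin (n + 2)) ℤ := fun k j =>
    if h : (k : ℕ) < n + 1 then C ⟨(k : ℕ) + 1, by omega⟩ j
    else if (j : ℕ) = n + 1 then 1 else 0 with hB
  have hBT : B.BlockTriangular id := by
    intro i j hij
    simp only [id] at hij
    have hij' : (j : ℕ) < (i : ℕ) := hij
    simp only [hB]
    by_cases h : (i : ℕ) < n + 1
    · rw [dif_pos h]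
      exact hlow _ _ (by simp only [Fin.val_mk]; omega)
    · rw [dif_neg h, if_neg (by omega)]
  have hdiag : ∀ k, B k k = 1 := by
    intro k
    simp only [hB]
    by_cases h : (k : ℕ) < n + 1
    · rw [dif_pos h]
      exact hsub _ _ rfl
    · have : (k : ℕ) = n + 1 := by omega
      rw [dif_neg h, if_pos this]
  have hdet : B.det = 1 := by
    rw [Matrix.det_of_upperTriangular hBT]
    simp [hdiag]
  have hu : IsUnit B.det := by rw [hdet]; exact isUnit_one
  refine ⟨B⁻¹, ?_, ?_⟩
  · rw [Matrix.det_nonsing_inv, hdet, Ring.inverse_one]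
  · intro i j hi
    set i' : Fin (n + 2) := ⟨(i : ℕ) - 1, by omega⟩ with hi'
    have hrow : ∀ k, C i k = B i' k := by
      intro k
      simp only [hB, hi']
      have h1 : ((i : ℕ) - 1) < n + 1 := by omega
      rw [dif_pos h1]
      congr 1
      exact Fin.ext (by simp; omega)
    have : (C * B⁻¹) i j = (B * B⁻¹) i' j := by
      simp only [Matrix.mul_apply]
      exact Finset.sum_congr rfl fun k _ => by rw [hrow]
    rw [this, Matrix.mul_nonsing_inv _ hu, Matrix.one_apply]
    have : (i' = j) ↔ ((i : ℕ) = (j : ℕ) + 1) := by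
      rw [Fin.ext_iff]; simp [hi']; omega
    simp [this]
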